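/- Let n ≥ 1, let f : {0,1}^n → {0,1} satisfy I[f] ≥ 1, let ε̃ ∈ (0, 1), and let s* ≥ (1/2)·√(2n·log(2n/ε̃)). Let e_{s*}(f) denote the number of influential edges (y, x) of f with n/2 − s* ≤ h(x) and h(y) ≤ n/2 + s*. Then (1 − 2ε̃)·2^{n−1}·I[f] ≤ e_{s*}(f) ≤ 2^{n−1}·I[f]. -/

import Mathlib

/-- Hamming weight of a point of the Boolean lattice `{0,1}^n`. -/
def hw {n : ℕ} (x : Fin n → Bool) : ℕ := (Finset.univ.filter (fun i => x i = true)).card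

/-- `bflip x i` is `x` with its `i`-th coordinate flipped. -/
def bflip {n : ℕ} (x : Fin n → Bool) (i : Fin n) : Fin n → Bool :=
  Function.update x i (!x i)

/-- The individual influence of coordinate `i` on `f`. -/
noncomputable def infl {n : ℕ} (f : (Fin n → Bool) → Bool) (i : Fin n) : ℝ :=
  ((Finset.univ.filter (fun x : Fin n → Bool => f x ≠ f (bflip x i))).card : ℝ) / 2 ^ n

/-- The total influence `I[f] = Σ_i I_i[f]`. -/
noncomputable def totalInfl {n : ℕ} (f : (Fin n → Bool) → Bool) : ℝ := ∑ i, infl f i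

lemma mgf_hw (n : ℕ) (t : ℝ) :
    ∑ y : Fin n → Bool, Real.exp (t * hw y) = (1 + Real.exp t) ^ n := by
  have h1 : ∀ y : Fin n → Bool, Real.exp (t * hw y)
      = ∏ i, (if y i = true then Real.exp t else 1) := by
    intro y
    rw [Finset.prod_ite, Finset.prod_const, Finset.prod_const, one_pow, mul_one,
      mul_comm, Real.exp_nat_mul]
    rfl
  simp_rw [h1]
  rw [← Fintype.prod_sum (fun (_ : Fin n) (b : Bool) => if b = true then Real.exp t else 1)]
  simp [add_comm]

lemma tail_bound (n : ℕ) (hn : 1 ≤ n) (s : ℝ) (hs : 0 ≤ s) :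
    ((Finset.univ.filter (fun y : Fin n → Bool => (n : ℝ) / 2 + s < (hw y : ℝ))).card : ℝ)
      ≤ 2 ^ n * Real.exp (-(2 * s ^ 2 / n)) := by
  have hn0 : (0:ℝ) < n := by exact_mod_cast hn
  set t : ℝ := 4 * s / n with ht
  have ht0 : 0 ≤ t := by positivity
  set S := Finset.univ.filter (fun y : Fin n → Bool => (n : ℝ) / 2 + s < (hw y : ℝ)) with hS
  have step1 : (S.card : ℝ) * Real.exp (t * ((n:ℝ)/2 + s)) ≤ (1 + Real.exp t) ^ n := by
    rw [← mgf_hw n t]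
    calc (S.card : ℝ) * Real.exp (t * ((n:ℝ)/2 + s))
        = ∑ _y ∈ S, Real.exp (t * ((n:ℝ)/2 + s)) := by rw [Finset.sum_const]; ring
      _ ≤ ∑ y ∈ S, Real.exp (t * hw y) := by
          apply Finset.sum_le_sum
          intro y hy
          have := (Finset.mem_filter.1 hy).2
          exact Real.exp_le_exp.2 (mul_le_mul_of_nonneg_left this.le ht0)
      _ ≤ ∑ y : Fin n → Bool, Real.exp (t * hw y) := by
          apply Finset.sum_le_sum_of_subset_of_nonneg (Finset.filter_subset _ _)
          intro y _ _; positivity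
  have step2 : (1 + Real.exp t) ^ n ≤ 2 ^ n * Real.exp (n * (t/2 + t^2/8)) := by
    have h1 : 1 + Real.exp t ≤ 2 * Real.exp (t/2 + t^2/8) := by
      have hc : 1 + Real.exp t = 2 * Real.exp (t/2) * Real.cosh (t/2) := by
        rw [Real.cosh_eq]
        have e1 : Real.exp (t/2) * Real.exp (t/2) = Real.exp t := by
          rw [← Real.exp_add]; norm_num
        have e2 : Real.exp (t/2) * Real.exp (-(t/2)) = 1 := by
          rw [← Real.exp_add]; simp
        calc 1 + Real.exp t
            = Real.exp (t/2) * Real.exp (t/2) + Real.exp (t/2) * Real.exp (-(t/2)) := by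
              rw [e1, e2]; ring
          _ = 2 * Real.exp (t/2) * ((Real.exp (t/2) + Real.exp (-(t/2)))/2) := by ring
      rw [hc, Real.exp_add]
      have := Real.cosh_le_exp_half_sq (t/2)
      calc 2 * Real.exp (t/2) * Real.cosh (t/2)
          ≤ 2 * Real.exp (t/2) * Real.exp ((t/2)^2/2) := by
            apply mul_le_mul_of_nonneg_left this; positivity
        _ = 2 * (Real.exp (t/2) * Real.exp (t^2/8)) := by ring_nf
    calc (1 + Real.exp t) ^ n ≤ (2 * Real.exp (t/2 + t^2/8)) ^ n := by
          apply pow_le_pow_left₀ (by positivity) h1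
      _ = 2 ^ n * Real.exp (n * (t/2 + t^2/8)) := by
          rw [mul_pow, ← Real.exp_nat_mul]
  have hexp : (0:ℝ) < Real.exp (t * ((n:ℝ)/2 + s)) := Real.exp_pos _
  have : (S.card : ℝ) ≤ (2 ^ n * Real.exp (n * (t/2 + t^2/8))) / Real.exp (t * ((n:ℝ)/2 + s)) := by
    rw [le_div_iff₀ hexp]
    exact step1.trans step2
  refine this.trans (le_of_eq ?_)
  rw [mul_div_assoc, ← Real.exp_sub]
  congr 1
  have hne : (n:ℝ) ≠ 0 := hn0.ne'
  rw [ht]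
  field_simp
  ring

lemma hw_le (n : ℕ) (x : Fin n → Bool) : hw x ≤ n := by
  simpa [hw] using Finset.card_filter_le Finset.univ (fun i => x i = true)

lemma hw_neg (n : ℕ) (x : Fin n → Bool) : hw (fun i => !x i) = n - hw x := by
  have h := Finset.card_filter_add_card_filter_not
    (s := (Finset.univ : Finset (Fin n))) (p := fun i => x i = true)
  simp only [Finset.card_univ, Fintype.card_fin] at h
  have : hw (fun i => !x i) = (Finset.univ.filter (fun i => ¬ x i = true)).card := by
    unfold hw; congr 1; apply Finset.filter_congr; intro i _; simp
  have hdef : (Finset.univ.filter (fun i => x i = true)).card = hw x := rfl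
  omega

lemma low_tail_card (n : ℕ) (s : ℝ) :
    (Finset.univ.filter (fun x : Fin n → Bool => (hw x : ℝ) < (n : ℝ) / 2 - s)).card
      = (Finset.univ.filter (fun y : Fin n → Bool => (n : ℝ) / 2 + s < (hw y : ℝ))).card := by
  apply Finset.card_bij' (fun x _ => fun j => !x j) (fun y _ => fun j => !y j)
  · intro x hx
    simp only [Finset.mem_filter, Finset.mem_univ, true_and] at hx ⊢
    rw [hw_neg]
    have h1 := hw_le n x
    have : ((n - hw x : ℕ) : ℝ) = (n : ℝ) - hw x := by
      rw [Nat.cast_sub h1]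
    rw [this]; linarith
  · intro y hy
    simp only [Finset.mem_filter, Finset.mem_univ, true_and] at hy ⊢
    rw [hw_neg]
    have h1 := hw_le n y
    have : ((n - hw y : ℕ) : ℝ) = (n : ℝ) - hw y := by
      rw [Nat.cast_sub h1]
    rw [this]; linarith
  · intro x _; funext j; simp
  · intro y _; funext j; simp

lemma bflip_self {n : ℕ} (x : Fin n → Bool) (i : Fin n) : bflip x i i = !x i := by
  simp [bflip]

lemma bflip_bflip {n : ℕ} (x : Fin n → Bool) (i : Fin n) : bflip (bflip x i) i = x := by
  unfold bflip
  rw [Function.update_idem, Function.update_self]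
  simp

lemma halves {n : ℕ} (f : (Fin n → Bool) → Bool) (i : Fin n) :
    2 * (Finset.univ.filter (fun x : Fin n → Bool =>
        x i = true ∧ f x ≠ f (bflip x i))).card
      = (Finset.univ.filter (fun x : Fin n → Bool => f x ≠ f (bflip x i))).card := by
  set A := Finset.univ.filter (fun x : Fin n → Bool => f x ≠ f (bflip x i)) with hA
  have hsplit := Finset.card_filter_add_card_filter_not
    (s := A) (p := fun x => x i = true)
  have e1 : Finset.univ.filter (fun x : Fin n → Bool => x i = true ∧ f x ≠ f (bflip x i))
      = A.filter (fun x => x i = true) := by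
    rw [hA, Finset.filter_filter]
    apply Finset.filter_congr; intro x _; tauto
  have e2 : (A.filter (fun x => x i = true)).card = (A.filter (fun x => ¬ x i = true)).card := by
    apply Finset.card_bij' (fun x _ => bflip x i) (fun x _ => bflip x i)
    · intro x hx
      simp only [hA, Finset.mem_filter, Finset.mem_univ, true_and] at hx ⊢
      obtain ⟨hd, hi⟩ := hx
      refine ⟨?_, ?_⟩
      · rw [bflip_bflip]; exact fun h => hd h.symm
      · rw [bflip_self, hi]; simp
    · intro x hx
      simp only [hA, Finset.mem_filter, Finset.mem_univ, true_and] at hx ⊢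
      obtain ⟨hd, hi⟩ := hx
      refine ⟨?_, ?_⟩
      · rw [bflip_bflip]; exact fun h => hd h.symm
      · rw [bflip_self]; simp only [Bool.not_eq_true] at hi; simp [hi]
    · intro x _; exact bflip_bflip x i
    · intro x _; exact bflip_bflip x i
  rw [e1]
  linarith [hsplit, e2]

lemma edge_count {n : ℕ} (f : (Fin n → Bool) → Bool) :
    2 * (Finset.univ.filter (fun p : (Fin n → Bool) × Fin n =>
        p.1 p.2 = true ∧ f p.1 ≠ f (bflip p.1 p.2))).card
      = ∑ i : Fin n,
        (Finset.univ.filter (fun x : Fin n → Bool => f x ≠ f (bflip x i))).card := by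
  have h1 : (Finset.univ.filter (fun p : (Fin n → Bool) × Fin n =>
        p.1 p.2 = true ∧ f p.1 ≠ f (bflip p.1 p.2))).card
      = ∑ i : Fin n, (Finset.univ.filter (fun x : Fin n → Bool =>
          x i = true ∧ f x ≠ f (bflip x i))).card := by
    rw [Finset.card_eq_sum_card_fiberwise
      (f := fun p : (Fin n → Bool) × Fin n => p.2) (t := Finset.univ)
      (fun p _ => Finset.mem_univ _)]
    apply Finset.sum_congr rfl
    intro i _
    apply Finset.card_bij (fun p _ => p.1)
    · intro p hp
      simp only [Finset.mem_filter, Finset.mem_univ, true_and] at hp ⊢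
      obtain ⟨h1, h2⟩ := hp
      rw [h2] at h1
      exact h1
    · intro p hp q hq h
      simp only [Finset.mem_filter, Finset.mem_univ, true_and] at hp hq
      exact Prod.ext h (hp.2.trans hq.2.symm)
    · intro x hx
      simp only [Finset.mem_filter, Finset.mem_univ, true_and] at hx
      refine ⟨(x, i), ?_, rfl⟩
      simp only [Finset.mem_filter, Finset.mem_univ, true_and]
      exact ⟨⟨hx.1, hx.2⟩, trivial⟩
  rw [h1, Finset.mul_sum]
  exact Finset.sum_congr rfl fun i _ => halves f i

lemma edge_count_real {n : ℕ} (hn : 1 ≤ n) (f : (Fin n → Bool) → Bool) :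
    ((Finset.univ.filter (fun p : (Fin n → Bool) × Fin n =>
        p.1 p.2 = true ∧ f p.1 ≠ f (bflip p.1 p.2))).card : ℝ)
      = 2 ^ (n - 1) * totalInfl f := by
  obtain ⟨m, rfl⟩ : ∃ m, n = m + 1 := ⟨n - 1, by omega⟩
  have h := edge_count f
  have h' : ((Finset.univ.filter (fun p : (Fin (m+1) → Bool) × Fin (m+1) =>
      p.1 p.2 = true ∧ f p.1 ≠ f (bflip p.1 p.2))).card : ℝ)
      = (∑ i : Fin (m+1), ((Finset.univ.filter
          (fun x : Fin (m+1) → Bool => f x ≠ f (bflip x i))).card : ℝ)) / 2 := by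
    have := congrArg (fun k : ℕ => (k : ℝ)) h
    push_cast at this
    push_cast
    linarith
  rw [h', totalInfl]
  simp only [infl]
  rw [Finset.sum_div, Finset.mul_sum]
  apply Finset.sum_congr rfl
  intro i _
  have : (m + 1) - 1 = m := by omega
  rw [this]
  rw [pow_succ]
  field_simp


/-- For `f` with `I[f] ≥ 1`, `ε̃ ∈ (0,1)` and `s* ≥ (1/2)√(2n·log(2n/ε̃))`, the number
`e_{s*}(f)` of influential edges `(y, x)` of `f` with `n/2 − s* ≤ h(x)` and
`h(y) ≤ n/2 + s*` satisfies `(1 − 2ε̃)·2^{n−1}·I[f] ≤ e_{s*}(f) ≤ 2^{n−1}·I[f]`. -/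
theorem middle_influential_edge_count (n : ℕ) (hn : 1 ≤ n)
    (f : (Fin n → Bool) → Bool) (hI : 1 ≤ totalInfl f)
    (εt : ℝ) (hεt0 : 0 < εt) (hεt1 : εt < 1)
    (s : ℝ) (hs : (1 / 2) * Real.sqrt (2 * n * Real.log (2 * n / εt)) ≤ s) :
    (1 - 2 * εt) * 2 ^ (n - 1) * totalInfl f ≤
      ((Finset.univ.filter (fun p : (Fin n → Bool) × Fin n =>
          p.1 p.2 = true ∧ f p.1 ≠ f (bflip p.1 p.2) ∧
          (n : ℝ) / 2 - s ≤ (hw (bflip p.1 p.2) : ℝ) ∧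
          (hw p.1 : ℝ) ≤ (n : ℝ) / 2 + s)).card : ℝ) ∧
    ((Finset.univ.filter (fun p : (Fin n → Bool) × Fin n =>
        p.1 p.2 = true ∧ f p.1 ≠ f (bflip p.1 p.2) ∧
        (n : ℝ) / 2 - s ≤ (hw (bflip p.1 p.2) : ℝ) ∧
        (hw p.1 : ℝ) ≤ (n : ℝ) / 2 + s)).card : ℝ)
      ≤ 2 ^ (n - 1) * totalInfl f := by
  have hn0 : (0:ℝ) < n := by exact_mod_cast hn
  have hs0 : 0 ≤ s := le_trans (by positivity) hs
  set M := Finset.univ.filter (fun p : (Fin n → Bool) × Fin n =>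
      p.1 p.2 = true ∧ f p.1 ≠ f (bflip p.1 p.2) ∧
      (n : ℝ) / 2 - s ≤ (hw (bflip p.1 p.2) : ℝ) ∧
      (hw p.1 : ℝ) ≤ (n : ℝ) / 2 + s) with hM
  set E := Finset.univ.filter (fun p : (Fin n → Bool) × Fin n =>
      p.1 p.2 = true ∧ f p.1 ≠ f (bflip p.1 p.2)) with hE
  set U := Finset.univ.filter (fun y : Fin n → Bool => (n : ℝ) / 2 + s < (hw y : ℝ)) with hU
  set L := Finset.univ.filter (fun x : Fin n → Bool => (hw x : ℝ) < (n : ℝ) / 2 - s) with hL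
  have hsub : M ⊆ E := by
    intro p hp
    simp only [hM, hE, Finset.mem_filter, Finset.mem_univ, true_and] at hp ⊢
    tauto
  -- decomposition of E \ M
  set B1 := Finset.univ.filter (fun p : (Fin n → Bool) × Fin n =>
      (n : ℝ) / 2 + s < (hw p.1 : ℝ)) with hB1
  set B2 := Finset.univ.filter (fun p : (Fin n → Bool) × Fin n =>
      p.1 p.2 = true ∧ (hw (bflip p.1 p.2) : ℝ) < (n : ℝ) / 2 - s) with hB2
  have hsdiff : E \ M ⊆ B1 ∪ B2 := by
    intro p hp
    simp only [hM, hE, hB1, hB2, Finset.mem_sdiff, Finset.mem_union,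
      Finset.mem_filter, Finset.mem_univ, true_and] at hp ⊢
    obtain ⟨⟨h1, h2⟩, h3⟩ := hp
    push_neg at h3
    rcases lt_or_ge (hw (bflip p.1 p.2) : ℝ) ((n:ℝ)/2 - s) with h | h
    · exact Or.inr ⟨h1, h⟩
    · exact Or.inl (h3 h1 h2 h)
  have hB1card : B1.card = U.card * n := by
    have : B1 = U ×ˢ Finset.univ := by
      ext p
      simp only [hB1, hU, Finset.mem_product, Finset.mem_filter, Finset.mem_univ,
        true_and, and_true]
    rw [this, Finset.card_product, Finset.card_univ, Fintype.card_fin]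
  have hB2card : B2.card ≤ L.card * n := by
    have : B2.card ≤ (L ×ˢ (Finset.univ : Finset (Fin n))).card := by
      refine Finset.card_le_card_of_injOn
        (fun p : (Fin n → Bool) × Fin n => (bflip p.1 p.2, p.2)) ?_ ?_
      · intro p hp
        simp only [hB2, Finset.mem_coe, Finset.mem_filter, Finset.mem_univ, true_and] at hp
        simp only [hL, Finset.mem_coe, Finset.mem_product, Finset.mem_filter, Finset.mem_univ, true_and]
        exact ⟨hp.2, trivial⟩
      · intro p _ q _ h
        simp only [Prod.mk.injEq] at h
        obtain ⟨h1, h2⟩ := h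
        have : p.1 = q.1 := by
          have := congrArg (fun z => bflip z p.2) h1
          rw [bflip_bflip, h2, bflip_bflip] at this
          exact this
        exact Prod.ext this h2
    rwa [Finset.card_product, Finset.card_univ, Fintype.card_fin] at this
  have hLU : L.card = U.card := low_tail_card n s
  -- tail estimate
  have hlog : Real.log (2 * n / εt) ≤ 2 * s ^ 2 / n := by
    rcases le_or_gt (Real.log (2 * n / εt)) 0 with h | h
    · exact h.trans (by positivity)
    · have hX : 0 ≤ 2 * n * Real.log (2 * n / εt) := by positivity
      have h1 : ((1/2) * Real.sqrt (2 * n * Real.log (2 * n / εt))) ^ 2 ≤ s ^ 2 :=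
        pow_le_pow_left₀ (by positivity) hs 2
      rw [mul_pow, Real.sq_sqrt hX] at h1
      rw [le_div_iff₀ hn0]
      linarith
  have hexp : Real.exp (-(2 * s ^ 2 / n)) ≤ εt / (2 * n) := by
    have hpos : (0:ℝ) < εt / (2 * n) := by positivity
    rw [← Real.exp_log hpos]
    apply Real.exp_le_exp.2
    have : εt / (2 * n) = (2 * n / εt)⁻¹ := by rw [inv_div]
    rw [this, Real.log_inv]
    linarith
  have hUbound : (U.card : ℝ) ≤ 2 ^ n * (εt / (2 * n)) := by
    refine (tail_bound n hn s hs0).trans ?_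
    exact mul_le_mul_of_nonneg_left hexp (by positivity)
  -- assemble
  have hEcard : (E.card : ℝ) = 2 ^ (n - 1) * totalInfl f := edge_count_real hn f
  have f2 : (M.card : ℝ) ≤ (E.card : ℝ) := by exact_mod_cast Finset.card_le_card hsub
  have f3 : (E.card : ℝ) ≤ (M.card : ℝ) + ((E \ M).card : ℝ) := by
    have h := Finset.card_le_card_sdiff_add_card (s := E) (t := M)
    have h' : (E.card:ℝ) ≤ ((E \ M).card:ℝ) + (M.card:ℝ) := by exact_mod_cast h
    linarith
  have f4 : ((E \ M).card : ℝ) ≤ 2 * n * (U.card : ℝ) := by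
    have h1 : (E \ M).card ≤ B1.card + B2.card :=
      le_trans (Finset.card_le_card hsdiff) (Finset.card_union_le _ _)
    have h2 : B1.card + B2.card ≤ 2 * (U.card * n) := by
      rw [hB1card]
      have h3 : B2.card ≤ U.card * n := by rw [← hLU]; exact hB2card
      linarith
    have : ((E \ M).card : ℝ) ≤ 2 * ((U.card : ℝ) * n) := by exact_mod_cast h1.trans h2
    linarith
  have f5 : 2 * (n:ℝ) * (U.card : ℝ) ≤ εt * 2 ^ n := by
    have := mul_le_mul_of_nonneg_left hUbound (by positivity : (0:ℝ) ≤ 2 * n)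
    refine this.trans (le_of_eq ?_)
    field_simp
  have f6 : (2:ℝ) ^ n = 2 * 2 ^ (n - 1) := by
    have h : n - 1 + 1 = n := by omega
    conv_lhs => rw [← h]
    rw [pow_succ]
    ring
  have f7 : εt * 2 ^ n ≤ 2 * εt * 2 ^ (n - 1) * totalInfl f := by
    rw [f6]
    have h1 : (0:ℝ) ≤ εt * 2 ^ (n - 1) := by positivity
    nlinarith
  constructor
  · nlinarith
  · linarith
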